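/- Royden's lemma (nonpositive bound case): Let V be a complex inner product space and let S be a symmetric bihermitian form on V. Suppose there is a real constant K ≤ 0 such that S(ζ,ζ,ζ,ζ) ≤ K‖ζ‖⁴ for every ζ ∈ V. Then for any finite family ζ₁,…,ζ_ν (ν ≥ 1) of pairwise orthogonal vectors in V, one has Σ_{α,β=1}^{ν} S(ζ_α, ζ_α, ζ_β, ζ_β) ≤ ((ν+1)/(2ν))·K·(Σ_{α=1}^{ν} ‖ζ_α‖²)². -/

import Mathlib

open Finset Complex

noncomputable def roy_e (t : ZMod 4) : ℂ := Complex.I ^ t.val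

lemma roy_I_pow_mod (n : ℕ) : Complex.I ^ (n % 4) = Complex.I ^ n := by
  conv_rhs => rw [← Nat.div_add_mod n 4]
  rw [pow_add, pow_mul, Complex.I_pow_four, one_pow, one_mul]

lemma roy_e_zero : roy_e 0 = 1 := by simp [roy_e, ZMod.val_zero]

lemma roy_e_one : roy_e 1 = Complex.I := by
  have : (1 : ZMod 4).val = 1 := rfl
  simp [roy_e, this]

lemma roy_e_add (s t : ZMod 4) : roy_e (s + t) = roy_e s * roy_e t := by
  unfold roy_e
  rw [ZMod.val_add, roy_I_pow_mod, pow_add]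

lemma roy_e_ne_zero (t : ZMod 4) : roy_e t ≠ 0 :=
  pow_ne_zero _ Complex.I_ne_zero

lemma roy_conj_e (t : ZMod 4) : (starRingEnd ℂ) (roy_e t) = roy_e (-t) := by
  have h1 : roy_e (-t) * roy_e t = 1 := by
    rw [← roy_e_add, neg_add_cancel, roy_e_zero]
  have h2 : (starRingEnd ℂ) (roy_e t) * roy_e t = 1 := by
    rw [mul_comm, Complex.mul_conj]
    unfold roy_e
    rw [map_pow]
    simp [Complex.normSq_I]
  exact mul_right_cancel₀ (roy_e_ne_zero t) (h2.trans h1.symm)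

lemma roy_e_mul_conj (t : ZMod 4) : roy_e t * (starRingEnd ℂ) (roy_e t) = 1 := by
  rw [roy_conj_e, ← roy_e_add, add_neg_cancel, roy_e_zero]

lemma roy_conj_mul_e (t : ZMod 4) : (starRingEnd ℂ) (roy_e t) * roy_e t = 1 := by
  rw [mul_comm]; exact roy_e_mul_conj t

lemma roy_shift_zero {ν : ℕ} (F : (Fin ν → ZMod 4) → ℂ) (δ : Fin ν → ZMod 4) (m : ℂ)
    (hm : m ≠ 1) (h : ∀ x, F (x + δ) = m * F x) : ∑ x : Fin ν → ZMod 4, F x = 0 := by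
  have key : ∑ x : Fin ν → ZMod 4, F x = m * ∑ x : Fin ν → ZMod 4, F x := by
    rw [Finset.mul_sum]
    calc ∑ x : Fin ν → ZMod 4, F x = ∑ x : Fin ν → ZMod 4, F (x + δ) :=
          (Fintype.sum_equiv (Equiv.addRight δ) _ _ (fun x => rfl)).symm
      _ = ∑ x : Fin ν → ZMod 4, m * F x := by simp only [h]
  have h0 : (1 - m) * ∑ x : Fin ν → ZMod 4, F x = 0 := by
    rw [sub_mul, one_mul, ← key, sub_self]
  rcases mul_eq_zero.mp h0 with h' | h'
  · exact absurd (by linear_combination h' : (1:ℂ) = m) (Ne.symm hm)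
  · exact h'

lemma roy_shift_factor (s1 s2 s3 s4 t1 t2 t3 t4 : ZMod 4) :
    roy_e (t1 + s1) * (starRingEnd ℂ) (roy_e (t2 + s2)) * roy_e (t3 + s3) *
        (starRingEnd ℂ) (roy_e (t4 + s4)) =
      roy_e s1 * (starRingEnd ℂ) (roy_e s2) * roy_e s3 * (starRingEnd ℂ) (roy_e s4) *
        (roy_e t1 * (starRingEnd ℂ) (roy_e t2) * roy_e t3 * (starRingEnd ℂ) (roy_e t4)) := by
  simp only [roy_e_add, map_mul]
  ring

lemma roy_vanish {ν : ℕ} (a b c d γ : Fin ν)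
    (hm : (if a = γ then Complex.I else 1) * (starRingEnd ℂ) (if b = γ then Complex.I else 1) *
          (if c = γ then Complex.I else 1) * (starRingEnd ℂ) (if d = γ then Complex.I else 1) ≠ 1) :
    ∑ x : Fin ν → ZMod 4,
      roy_e (x a) * (starRingEnd ℂ) (roy_e (x b)) * roy_e (x c) * (starRingEnd ℂ) (roy_e (x d)) = 0 := by
  set δ : Fin ν → ZMod 4 := fun α => if α = γ then 1 else 0 with hδ
  have hδe : ∀ α, roy_e (δ α) = if α = γ then Complex.I else 1 := by
    intro α
    by_cases h : α = γ <;> simp [hδ, h, roy_e_one, roy_e_zero]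
  refine roy_shift_zero _ δ _ hm ?_
  intro x
  simp only [Pi.add_apply]
  rw [roy_shift_factor, hδe, hδe, hδe, hδe]

lemma roy_char {ν : ℕ} (a b c d : Fin ν) :
    ∑ x : Fin ν → ZMod 4,
      roy_e (x a) * (starRingEnd ℂ) (roy_e (x b)) * roy_e (x c) * (starRingEnd ℂ) (roy_e (x d)) =
    if (a = b ∧ c = d) ∨ (a = d ∧ b = c) then (4 : ℂ) ^ ν else 0 := by
  by_cases hP : a = b ∧ c = d
  · obtain ⟨rfl, rfl⟩ := hP
    rw [if_pos (Or.inl ⟨rfl, rfl⟩)]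
    have h1 : ∀ x : Fin ν → ZMod 4,
        roy_e (x a) * (starRingEnd ℂ) (roy_e (x a)) * roy_e (x c) * (starRingEnd ℂ) (roy_e (x c))
          = 1 := by
      intro x
      rw [roy_e_mul_conj, one_mul, roy_e_mul_conj]
    simp only [h1, Finset.sum_const, Finset.card_univ, nsmul_eq_mul, mul_one]
    norm_num [Fintype.card_fun]
  · by_cases hQ : a = d ∧ b = c
    · obtain ⟨rfl, rfl⟩ := hQ
      rw [if_pos (Or.inr ⟨rfl, rfl⟩)]
      have h1 : ∀ x : Fin ν → ZMod 4,
          roy_e (x a) * (starRingEnd ℂ) (roy_e (x b)) * roy_e (x b) * (starRingEnd ℂ) (roy_e (x a))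
            = 1 := by
        intro x
        have : roy_e (x a) * (starRingEnd ℂ) (roy_e (x b)) * roy_e (x b) *
            (starRingEnd ℂ) (roy_e (x a)) =
            (roy_e (x a) * (starRingEnd ℂ) (roy_e (x a))) *
            ((starRingEnd ℂ) (roy_e (x b)) * roy_e (x b)) := by ring
        rw [this, roy_e_mul_conj, roy_conj_mul_e, one_mul]
      simp only [h1, Finset.sum_const, Finset.card_univ, nsmul_eq_mul, mul_one]
      norm_num [Fintype.card_fun]
    · rw [if_neg (by tauto)]
      by_cases hab : a = b
      · -- then c ≠ d; take γ = c
        have hcd : c ≠ d := fun h => hP ⟨hab, h⟩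
        subst hab
        refine roy_vanish a a c d c ?_
        by_cases hac : a = c <;>
          simp [hac, hcd.symm, Complex.conj_I] <;>
          norm_num [Complex.ext_iff]
      · by_cases had : a = d
        · -- then b ≠ c; take γ = c
          have hbc : b ≠ c := fun h => hQ ⟨had, h⟩
          subst had
          refine roy_vanish a b c a c ?_
          by_cases hac : a = c <;>
            simp [hac, hbc, Complex.conj_I] <;>
            norm_num [Complex.ext_iff]
        · -- a ≠ b, a ≠ d; take γ = a
          refine roy_vanish a b c d a ?_
          by_cases hca : c = a <;>
            simp [hca, Ne.symm hab, Ne.symm had, hab, had, Complex.conj_I] <;>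
            norm_num [Complex.ext_iff]

lemma roy_ite_diag {α : Type*} [DecidableEq α] (a b d : α) (X : ℂ) :
    (if (a = b ∧ a = d) ∨ (a = d ∧ b = a) then X else 0)
    = if a = d then (if a = b then X else 0) else 0 := by
  by_cases hb : a = b <;> by_cases hd : a = d <;> simp_all [eq_comm]

lemma roy_ite_split {α : Type*} [DecidableEq α] (a b c d : α) (hac : a ≠ c) (X : ℂ) :
    (if (a = b ∧ c = d) ∨ (a = d ∧ b = c) then X else 0)
    = (if c = d then (if a = b then X else 0) else 0)
      + (if a = d then (if b = c then X else 0) else 0) := by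
  by_cases h1 : a = b <;> by_cases h2 : c = d <;> by_cases h3 : a = d <;>
    by_cases h4 : b = c <;> simp_all [eq_comm]

/-- **Royden's lemma (nonpositive bound case).**
Let `V` be a complex inner product space and `S` a symmetric bihermitian form on `V`.
If `K ≤ 0` and `S(ζ,ζ,ζ,ζ) ≤ K ‖ζ‖⁴` for all `ζ`, then for any finite family of
pairwise orthogonal vectors `ζ₁, …, ζ_ν` (with `ν ≥ 1`) one has
`∑_{α,β} S(ζ_α, ζ_α, ζ_β, ζ_β) ≤ ((ν+1)/(2ν)) K (∑_α ‖ζ_α‖²)²`. -/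
theorem royden_lemma_nonpositive
    {V : Type*} [NormedAddCommGroup V] [InnerProductSpace ℂ V]
    (S : V → V → V → V → ℂ) (K : ℝ) (hK : K ≤ 0)
    (hlin1 : ∀ η σ ω, IsLinearMap ℂ fun ζ => S ζ η σ ω)
    (hlin3 : ∀ ζ η ω, IsLinearMap ℂ fun σ => S ζ η σ ω)
    (hadd2 : ∀ ζ σ ω η₁ η₂, S ζ (η₁ + η₂) σ ω = S ζ η₁ σ ω + S ζ η₂ σ ω)
    (hsmul2 : ∀ ζ σ ω (c : ℂ) η, S ζ (c • η) σ ω = starRingEnd ℂ c * S ζ η σ ω)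
    (hadd4 : ∀ ζ η σ ω₁ ω₂, S ζ η σ (ω₁ + ω₂) = S ζ η σ ω₁ + S ζ η σ ω₂)
    (hsmul4 : ∀ ζ η σ (c : ℂ) ω, S ζ η σ (c • ω) = starRingEnd ℂ c * S ζ η σ ω)
    (hsym : ∀ ζ η σ ω, S ζ η σ ω = S σ η ζ ω)
    (hherm : ∀ ζ η σ ω, S η ζ ω σ = starRingEnd ℂ (S ζ η σ ω))
    (hbound : ∀ ζ : V, (S ζ ζ ζ ζ).re ≤ K * ‖ζ‖ ^ 4)
    (ν : ℕ) (hν : 1 ≤ ν) (ζ : Fin ν → V)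
    (horth : ∀ α β, α ≠ β → (inner ℂ (ζ α) (ζ β) : ℂ) = 0) :
    (∑ α, ∑ β, S (ζ α) (ζ α) (ζ β) (ζ β)).re ≤
      ((ν : ℝ) + 1) / (2 * ν) * K * (∑ α, ‖ζ α‖ ^ 2) ^ 2 := by
  -- abbreviations
  set N : ℝ := ∑ α, ‖ζ α‖ ^ 2 with hN
  set T : ℂ := ∑ α, ∑ β, S (ζ α) (ζ α) (ζ β) (ζ β) with hT
  set D : ℂ := ∑ α, S (ζ α) (ζ α) (ζ α) (ζ α) with hD
  -- multilinearity helpers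
  have hs1 : ∀ (f : Fin ν → V) η σ ω, S (∑ a, f a) η σ ω = ∑ a, S (f a) η σ ω :=
    fun f η σ ω => map_sum (IsLinearMap.mk' _ (hlin1 η σ ω)) f univ
  have hs1m : ∀ (c : ℂ) v η σ ω, S (c • v) η σ ω = c * S v η σ ω :=
    fun c v η σ ω => (hlin1 η σ ω).map_smul c v
  have hs2 : ∀ ξ (f : Fin ν → V) σ ω, S ξ (∑ b, f b) σ ω = ∑ b, S ξ (f b) σ ω :=
    fun ξ f σ ω => map_sum (AddMonoidHom.mk' (fun η => S ξ η σ ω) (hadd2 ξ σ ω)) f univ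
  have hs3 : ∀ ξ η (f : Fin ν → V) ω, S ξ η (∑ c, f c) ω = ∑ c, S ξ η (f c) ω :=
    fun ξ η f ω => map_sum (IsLinearMap.mk' _ (hlin3 ξ η ω)) f univ
  have hs3m : ∀ ξ η (c : ℂ) v ω, S ξ η (c • v) ω = c * S ξ η v ω :=
    fun ξ η c v ω => (hlin3 ξ η ω).map_smul c v
  have hs4 : ∀ ξ η σ (f : Fin ν → V), S ξ η σ (∑ d, f d) = ∑ d, S ξ η σ (f d) :=
    fun ξ η σ f => map_sum (AddMonoidHom.mk' (fun ω => S ξ η σ ω) (hadd4 ξ η σ)) f univ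
  -- the averaged vector
  have expand : ∀ x : Fin ν → ZMod 4,
      S (∑ a, roy_e (x a) • ζ a) (∑ a, roy_e (x a) • ζ a) (∑ a, roy_e (x a) • ζ a)
        (∑ a, roy_e (x a) • ζ a)
      = ∑ a, ∑ b, ∑ c, ∑ d,
          roy_e (x a) * (starRingEnd ℂ) (roy_e (x b)) * roy_e (x c) *
            (starRingEnd ℂ) (roy_e (x d)) * S (ζ a) (ζ b) (ζ c) (ζ d) := by
    intro x
    rw [hs1]
    refine Finset.sum_congr rfl fun a _ => ?_
    rw [hs1m, hs2, Finset.mul_sum]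
    refine Finset.sum_congr rfl fun b _ => ?_
    rw [hsmul2, hs3, Finset.mul_sum, Finset.mul_sum]
    refine Finset.sum_congr rfl fun c _ => ?_
    rw [hs3m, hs4, Finset.mul_sum, Finset.mul_sum, Finset.mul_sum]
    refine Finset.sum_congr rfl fun d _ => ?_
    rw [hsmul4]
    ring
  -- sum over all phase patterns
  have bigsum : ∑ x : Fin ν → ZMod 4,
      S (∑ a, roy_e (x a) • ζ a) (∑ a, roy_e (x a) • ζ a) (∑ a, roy_e (x a) • ζ a)
        (∑ a, roy_e (x a) • ζ a) = (4 : ℂ) ^ ν * (2 * T - D) := by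
    have step1 : ∑ x : Fin ν → ZMod 4,
        S (∑ a, roy_e (x a) • ζ a) (∑ a, roy_e (x a) • ζ a) (∑ a, roy_e (x a) • ζ a)
          (∑ a, roy_e (x a) • ζ a)
        = ∑ a, ∑ b, ∑ c, ∑ d,
            (if (a = b ∧ c = d) ∨ (a = d ∧ b = c) then (4 : ℂ) ^ ν else 0)
              * S (ζ a) (ζ b) (ζ c) (ζ d) := by
      rw [Finset.sum_congr rfl fun x _ => expand x]
      rw [Finset.sum_comm]
      refine Finset.sum_congr rfl fun a _ => ?_
      rw [Finset.sum_comm]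
      refine Finset.sum_congr rfl fun b _ => ?_
      rw [Finset.sum_comm]
      refine Finset.sum_congr rfl fun c _ => ?_
      rw [Finset.sum_comm]
      refine Finset.sum_congr rfl fun d _ => ?_
      rw [← Finset.sum_mul, roy_char]
    rw [step1]
    have key : ∀ a c : Fin ν,
        (∑ b, ∑ d, (if (a = b ∧ c = d) ∨ (a = d ∧ b = c) then (4 : ℂ) ^ ν else 0)
          * S (ζ a) (ζ b) (ζ c) (ζ d))
        = (4 : ℂ) ^ ν * S (ζ a) (ζ a) (ζ c) (ζ c) + (4 : ℂ) ^ ν * S (ζ a) (ζ c) (ζ c) (ζ a)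
            - (if a = c then (4 : ℂ) ^ ν * S (ζ a) (ζ a) (ζ a) (ζ a) else 0) := by
      intro a c
      simp only [ite_mul, zero_mul]
      by_cases hac : a = c
      · subst hac
        have hpt : ∀ b d : Fin ν,
            (if (a = b ∧ a = d) ∨ (a = d ∧ b = a) then (4 : ℂ) ^ ν * S (ζ a) (ζ b) (ζ a) (ζ d) else 0)
            = if a = d then (if a = b then (4 : ℂ) ^ ν * S (ζ a) (ζ b) (ζ a) (ζ d) else 0) else 0 :=
          fun b d => roy_ite_diag a b d _
        simp only [hpt, Finset.sum_ite_eq, Finset.mem_univ, if_true, if_pos rfl]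
        ring
      · have hpt : ∀ b d : Fin ν,
            (if (a = b ∧ c = d) ∨ (a = d ∧ b = c) then (4 : ℂ) ^ ν * S (ζ a) (ζ b) (ζ c) (ζ d) else 0)
            = (if c = d then (if a = b then (4 : ℂ) ^ ν * S (ζ a) (ζ b) (ζ c) (ζ d) else 0) else 0)
              + (if a = d then (if b = c then (4 : ℂ) ^ ν * S (ζ a) (ζ b) (ζ c) (ζ d) else 0) else 0) :=
          fun b d => roy_ite_split a b c d hac _
        simp only [hpt, Finset.sum_add_distrib, Finset.sum_ite_eq, Finset.sum_ite_eq',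
          Finset.mem_univ, if_true, if_neg hac]
        ring
    rw [Finset.sum_congr rfl fun a _ => (Finset.sum_comm :
      (∑ b, ∑ c, ∑ d, (if (a = b ∧ c = d) ∨ (a = d ∧ b = c) then (4 : ℂ) ^ ν else 0)
          * S (ζ a) (ζ b) (ζ c) (ζ d)) = _)]
    rw [Finset.sum_congr rfl fun a _ => Finset.sum_congr rfl fun c _ => key a c]
    have h2 : ∀ a c : Fin ν, S (ζ a) (ζ c) (ζ c) (ζ a) = S (ζ c) (ζ c) (ζ a) (ζ a) :=
      fun a c => hsym (ζ a) (ζ c) (ζ c) (ζ a)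
    simp only [Finset.sum_sub_distrib, Finset.sum_add_distrib, Finset.sum_ite_eq,
      Finset.mem_univ, if_true]
    have m1 : (∑ a, ∑ c, (4:ℂ)^ν * S (ζ a) (ζ a) (ζ c) (ζ c)) = (4:ℂ)^ν * T := by
      rw [hT, Finset.mul_sum]
      exact Finset.sum_congr rfl fun a _ => (Finset.mul_sum _ _ _).symm
    have m2 : (∑ a, ∑ c, (4:ℂ)^ν * S (ζ a) (ζ c) (ζ c) (ζ a)) = (4:ℂ)^ν * T := by
      rw [hT, Finset.mul_sum, Finset.sum_comm]
      refine Finset.sum_congr rfl fun c _ => ?_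
      rw [Finset.mul_sum]
      refine Finset.sum_congr rfl fun a _ => ?_
      rw [h2]
    have m3 : (∑ a, (4:ℂ)^ν * S (ζ a) (ζ a) (ζ a) (ζ a)) = (4:ℂ)^ν * D := by
      rw [hD, Finset.mul_sum]
    rw [m1, m2, m3]
    ring
  -- the norm of each averaged vector
  have hZnorm : ∀ x : Fin ν → ZMod 4, ‖∑ a, roy_e (x a) • ζ a‖ ^ 2 = N := by
    intro x
    have hinn : (inner ℂ (∑ a, roy_e (x a) • ζ a) (∑ a, roy_e (x a) • ζ a) : ℂ) = (N : ℂ) := by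
      rw [sum_inner]
      have hrow : ∀ a : Fin ν, (inner ℂ (roy_e (x a) • ζ a) (∑ b, roy_e (x b) • ζ b) : ℂ)
          = (‖ζ a‖ : ℂ) ^ 2 := by
        intro a
        rw [inner_sum]
        rw [Finset.sum_eq_single a]
        · rw [inner_smul_left, inner_smul_right]
          rw [← mul_assoc, mul_comm ((starRingEnd ℂ) (roy_e (x a))) (roy_e (x a)),
            roy_e_mul_conj, one_mul]
          exact inner_self_eq_norm_sq_to_K (ζ a)
        · intro b _ hb
          rw [inner_smul_left, inner_smul_right, horth a b (Ne.symm hb)]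
          ring
        · intro h
          exact absurd (Finset.mem_univ a) h
      rw [Finset.sum_congr rfl fun a _ => hrow a]
      rw [hN]
      push_cast
      rfl
    have := inner_self_eq_norm_sq (𝕜 := ℂ) (∑ a, roy_e (x a) • ζ a)
    rw [hinn] at this
    rw [← this]
    simp
  -- real part estimate for the big sum
  have hre : ((4 : ℝ) ^ ν) * (2 * T - D).re ≤ ((4 : ℝ) ^ ν) * (K * N ^ 2) := by
    have h1 : ((4 : ℂ) ^ ν * (2 * T - D)).re = ((4 : ℝ) ^ ν) * (2 * T - D).re := by
      rw [show ((4 : ℂ) ^ ν) = (((4 : ℝ) ^ ν : ℝ) : ℂ) by push_cast; ring]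
      exact Complex.re_ofReal_mul _ _
    rw [← h1, ← bigsum, Complex.re_sum]
    have h2 : ∀ x : Fin ν → ZMod 4,
        (S (∑ a, roy_e (x a) • ζ a) (∑ a, roy_e (x a) • ζ a) (∑ a, roy_e (x a) • ζ a)
          (∑ a, roy_e (x a) • ζ a)).re ≤ K * N ^ 2 := by
      intro x
      calc (S (∑ a, roy_e (x a) • ζ a) (∑ a, roy_e (x a) • ζ a) (∑ a, roy_e (x a) • ζ a)
          (∑ a, roy_e (x a) • ζ a)).re ≤ K * ‖∑ a, roy_e (x a) • ζ a‖ ^ 4 := hbound _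
        _ = K * N ^ 2 := by
            rw [show ‖∑ a, roy_e (x a) • ζ a‖ ^ 4 = (‖∑ a, roy_e (x a) • ζ a‖ ^ 2) ^ 2 by ring,
              hZnorm x]
    calc ∑ x : Fin ν → ZMod 4,
        (S (∑ a, roy_e (x a) • ζ a) (∑ a, roy_e (x a) • ζ a) (∑ a, roy_e (x a) • ζ a)
          (∑ a, roy_e (x a) • ζ a)).re ≤ ∑ _x : Fin ν → ZMod 4, K * N ^ 2 :=
          Finset.sum_le_sum fun x _ => h2 x
      _ = ((4 : ℝ) ^ ν) * (K * N ^ 2) := by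
          rw [Finset.sum_const, Finset.card_univ, nsmul_eq_mul]
          norm_num [Fintype.card_fun]
  have hmain : (2 * T - D).re ≤ K * N ^ 2 :=
    le_of_mul_le_mul_left (by linarith [hre]) (by positivity : (0 : ℝ) < (4 : ℝ) ^ ν)
  -- bound on the diagonal term
  have hνpos : (0 : ℝ) < ν := by exact_mod_cast hν
  have hDbound : D.re ≤ K * N ^ 2 / ν := by
    have h1 : D.re ≤ K * ∑ a, ‖ζ a‖ ^ 4 := by
      rw [hD, Complex.re_sum, Finset.mul_sum]
      exact Finset.sum_le_sum fun a _ => hbound (ζ a)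
    have h2 : N ^ 2 ≤ (ν : ℝ) * ∑ a, ‖ζ a‖ ^ 4 := by
      have := sq_sum_le_card_mul_sum_sq (s := (Finset.univ : Finset (Fin ν)))
        (f := fun a => ‖ζ a‖ ^ 2)
      simp only [Finset.card_univ, Fintype.card_fin] at this
      calc N ^ 2 = (∑ a, ‖ζ a‖ ^ 2) ^ 2 := by rw [hN]
        _ ≤ (ν : ℝ) * ∑ a, (‖ζ a‖ ^ 2) ^ 2 := this
        _ = (ν : ℝ) * ∑ a, ‖ζ a‖ ^ 4 := by
            congr 1
            exact Finset.sum_congr rfl fun a _ => by ring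
    have h3 : K * ∑ a, ‖ζ a‖ ^ 4 ≤ K * (N ^ 2 / ν) := by
      apply mul_le_mul_of_nonpos_left _ hK
      rw [div_le_iff₀ hνpos]
      linarith [h2]
    calc D.re ≤ K * ∑ a, ‖ζ a‖ ^ 4 := h1
      _ ≤ K * (N ^ 2 / ν) := h3
      _ = K * N ^ 2 / ν := by ring
  -- conclude
  have h2T : 2 * T.re - D.re ≤ K * N ^ 2 := by
    have : (2 * T - D).re = 2 * T.re - D.re := by
      simp [Complex.sub_re, Complex.mul_re]
    linarith [hmain, this.symm.le, this.le]
  have hgoal : T.re ≤ ((ν : ℝ) + 1) / (2 * ν) * K * N ^ 2 := by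
    have heq : ((ν : ℝ) + 1) / (2 * ν) * K * N ^ 2 = (K * N ^ 2 + K * N ^ 2 / ν) / 2 := by
      field_simp
    rw [heq]
    linarith [h2T, hDbound]
  exact hgoal
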